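/- Let $K_\eta$ be the smooth truncation at scale $\eta>0$ of a Calderón–Zygmund kernel with modulus of continuity $\omega$. If for all $x,y,\xi$ with $|x-y|\ge\eta/4$, $|\xi|<\eta/8$ one has $|K_\eta(x,y)-K_\eta(x+\xi,y)|\le C|x-y|^{-n}[\omega(|\xi|/|x-y|)+|\xi|/|x-y|]$, and $K_\eta(x,y)=K_\eta(x+\xi,y)=0$ when $|x-y|<\eta/4$, then for any locally integrable $f$ and $x\in\mathbb{R}^n$, $$\int_{\mathbb{R}^n}|K_\eta(x,y)-K_\eta(x+\xi,y)|\,|f(y)|\,dy \le C'\left[\frac{|\xi|}{\eta}+\int_0^{8|\xi|/\eta}\frac{\omega(s)}{s}\,ds\right]\mathcal{M}f(x),$$ with $C'$ depending only on $n$ and $C$. -/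

import Mathlib

open MeasureTheory ENNReal NNReal Metric Set

/-- The Hardy--Littlewood maximal function (ball averages), with values in `ℝ≥0∞`. -/
noncomputable def hlMaximal {n : ℕ} (f : EuclideanSpace ℝ (Fin n) → ℝ)
    (x : EuclideanSpace ℝ (Fin n)) : ℝ≥0∞ :=
  ⨆ (z : EuclideanSpace ℝ (Fin n)) (r : ℝ) (_ : 0 < r) (_ : x ∈ Metric.ball z r),
    (volume (Metric.ball z r))⁻¹ * ∫⁻ y in Metric.ball z r, ENNReal.ofReal |f y|

lemma lemA' (ω : ℝ → ℝ) (hω0 : ∀ t, 0 ≤ ω t) (hωmono : MonotoneOn ω (Set.Ico 0 1))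
    (hDini : IntegrableOn (fun t => ω t / t) (Set.Ioc 0 1) volume)
    {a : ℝ} (ha : 0 < a) (ha1 : 2 * a < 1) :
    ω a * Real.log 2 ≤ ∫ s in Set.Ioc a (2 * a), ω s / s := by
  have hsub : Set.Ioc a (2 * a) ⊆ Set.Ioc 0 1 := Set.Ioc_subset_Ioc ha.le (by linarith)
  have hint : IntegrableOn (fun s => ω s / s) (Set.Ioc a (2 * a)) volume := hDini.mono_set hsub
  have hle : a ≤ 2 * a := by linarith
  have hint2 : IntegrableOn (fun s => ω a / s) (Set.Ioc a (2 * a)) volume := by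
    rw [← intervalIntegrable_iff_integrableOn_Ioc_of_le hle]
    apply ContinuousOn.intervalIntegrable
    apply ContinuousOn.div continuousOn_const continuousOn_id
    intro s hs
    rw [Set.uIcc_of_le hle] at hs
    exact ne_of_gt (lt_of_lt_of_le ha hs.1)
  have heq : ∫ s in Set.Ioc a (2 * a), ω a / s = ω a * Real.log 2 := by
    rw [← intervalIntegral.integral_of_le hle]
    have : ∀ s, ω a / s = ω a * (1 / s) := fun s => by ring
    simp_rw [this]
    rw [intervalIntegral.integral_const_mul, integral_one_div]
    · congr 1
      field_simp
    · rw [Set.uIcc_of_le hle]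
      intro h
      exact absurd h.1 (by linarith)
  rw [← heq]
  apply setIntegral_mono_on hint2 hint measurableSet_Ioc
  intro s hs
  have hs0 : 0 < s := lt_trans ha hs.1
  have : ω a ≤ ω s := hωmono ⟨ha.le, by linarith⟩ ⟨hs0.le, by rcases hs with ⟨h1,h2⟩; linarith⟩ hs.1.le
  gcongr

lemma lemB' (ω : ℝ → ℝ) (hω0 : ∀ t, 0 ≤ ω t) (hωmono : MonotoneOn ω (Set.Ico 0 1))
    (hDini : IntegrableOn (fun t => ω t / t) (Set.Ioc 0 1) volume)
    {T : ℝ} (hT0 : 0 < T) (hT1 : T < 1) (N : ℕ) :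
    (∑ k ∈ Finset.range N, ω (T / 2 ^ (k + 1))) * Real.log 2 ≤ ∫ s in Set.Ioc 0 T, ω s / s := by
  have hTsub : Set.Ioc 0 T ⊆ Set.Ioc 0 1 := Set.Ioc_subset_Ioc le_rfl hT1.le
  have hintT : IntegrableOn (fun s => ω s / s) (Set.Ioc 0 T) volume := hDini.mono_set hTsub
  have hIk : ∀ k : ℕ, IntegrableOn (fun s => ω s / s) (Set.Ioc (T / 2 ^ (k + 1)) (T / 2 ^ k)) volume := by
    intro k
    apply hintT.mono_set
    apply Set.Ioc_subset_Ioc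
    · positivity
    · apply div_le_self hT0.le (one_le_pow₀ one_le_two)
  have key : ∀ N : ℕ, ∑ k ∈ Finset.range N, ∫ s in Set.Ioc (T / 2 ^ (k + 1)) (T / 2 ^ k), ω s / s
      = ∫ s in Set.Ioc (T / 2 ^ N) T, ω s / s := by
    intro N
    induction N with
    | zero => simp
    | succ N ih =>
      rw [Finset.sum_range_succ, ih, add_comm]
      rw [← MeasureTheory.setIntegral_union (Set.Ioc_disjoint_Ioc_of_le le_rfl) measurableSet_Ioc (hIk N)
        (hintT.mono_set (Set.Ioc_subset_Ioc (by positivity) le_rfl))]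
      rw [Set.Ioc_union_Ioc_eq_Ioc]
      · apply div_le_div_of_nonneg_left hT0.le (by positivity)
        exact pow_le_pow_right₀ one_le_two (Nat.le_succ N)
      · apply div_le_self hT0.le (one_le_pow₀ one_le_two)
  calc (∑ k ∈ Finset.range N, ω (T / 2 ^ (k + 1))) * Real.log 2
      = ∑ k ∈ Finset.range N, ω (T / 2 ^ (k + 1)) * Real.log 2 := Finset.sum_mul ..
    _ ≤ ∑ k ∈ Finset.range N, ∫ s in Set.Ioc (T / 2 ^ (k + 1)) (T / 2 ^ k), ω s / s := by
        apply Finset.sum_le_sum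
        intro k _
        have h2 : (2 : ℝ) * (T / 2 ^ (k + 1)) = T / 2 ^ k := by
          rw [pow_succ]; field_simp
        have := lemA' ω hω0 hωmono hDini (a := T / 2 ^ (k + 1)) (by positivity)
          (by rw [h2]; exact lt_of_le_of_lt (div_le_self hT0.le (one_le_pow₀ one_le_two)) hT1)
        rwa [h2] at this
    _ = ∫ s in Set.Ioc (T / 2 ^ N) T, ω s / s := key N
    _ ≤ ∫ s in Set.Ioc 0 T, ω s / s := by
        apply setIntegral_mono_set hintT
        · rw [Filter.EventuallyLE]
          apply (ae_restrict_iff' measurableSet_Ioc).2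
          exact ae_of_all _ fun s hs => div_nonneg (hω0 s) hs.1.le
        · exact (Set.Ioc_subset_Ioc (by positivity) le_rfl).eventuallyLE

/-- If the truncated kernel `K_η` satisfies the translation-difference estimate for
`|x-y| ≥ η/4`, `|ξ| < η/8`, and vanishes for `|x-y| < η/4`, then
`∫ |K_η(x,y)-K_η(x+ξ,y)| |f(y)| dy ≤ C' [|ξ|/η + ∫_0^{8|ξ|/η} ω(s)/s ds] M f(x)`. -/
theorem stmt6 (n : ℕ) (η : ℝ) (hη : 0 < η)
    (Kη : EuclideanSpace ℝ (Fin n) → EuclideanSpace ℝ (Fin n) → ℂ)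
    (ω : ℝ → ℝ) (hω0 : ∀ t, 0 ≤ ω t) (hωmono : MonotoneOn ω (Set.Ico 0 1))
    (hDini : IntegrableOn (fun t => ω t / t) (Set.Ioc 0 1) volume)
    (C : ℝ) (hC : 0 < C)
    (hdiff : ∀ x y ξ : EuclideanSpace ℝ (Fin n), ‖ξ‖ < η / 8 → η / 4 ≤ ‖x - y‖ →
      ‖Kη x y - Kη (x + ξ) y‖ ≤
        C / ‖x - y‖ ^ (n : ℝ) * (ω (‖ξ‖ / ‖x - y‖) + ‖ξ‖ / ‖x - y‖))
    (hvanish : ∀ x y ξ : EuclideanSpace ℝ (Fin n), ‖ξ‖ < η / 8 → ‖x - y‖ < η / 4 →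
      Kη x y = 0 ∧ Kη (x + ξ) y = 0) :
    ∃ C' : ℝ, 0 < C' ∧ ∀ ξ : EuclideanSpace ℝ (Fin n), ‖ξ‖ < η / 8 →
      ∀ f : EuclideanSpace ℝ (Fin n) → ℝ, LocallyIntegrable f volume → ∀ x,
        (∫⁻ y, ENNReal.ofReal (‖Kη x y - Kη (x + ξ) y‖ * |f y|)) ≤
          ENNReal.ofReal (C' * (‖ξ‖ / η +
              ∫ s in Set.Ioc (0 : ℝ) (8 * ‖ξ‖ / η), ω s / s)) *
            hlMaximal f x := by
  have hL : 0 < Real.log 2 := Real.log_pos one_lt_two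
  rcases Nat.eq_zero_or_pos n with hn | hn
  · -- trivial case n = 0
    refine ⟨1, one_pos, ?_⟩
    intro ξ hξ f hf x
    have hz : ∀ y : EuclideanSpace ℝ (Fin n), ‖x - y‖ < η / 4 := by
      intro y
      subst hn
      have : x - y = 0 := Subsingleton.elim _ _
      rw [this, norm_zero]; linarith
    have h0 : ∀ y : EuclideanSpace ℝ (Fin n), Kη x y - Kη (x + ξ) y = 0 := by
      intro y
      obtain ⟨h1, h2⟩ := hvanish x y ξ hξ (hz y)
      rw [h1, h2, sub_zero]
    simp only [h0, norm_zero, zero_mul, ENNReal.ofReal_zero, lintegral_zero]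
    exact zero_le
  -- main case
  haveI : Nonempty (Fin n) := Fin.pos_iff_nonempty.mp hn
  haveI : Nontrivial (EuclideanSpace ℝ (Fin n)) := inferInstance
  set V : ℝ≥0∞ := volume (Metric.ball (0 : EuclideanSpace ℝ (Fin n)) 1) with hVdef
  have hV0 : V ≠ 0 := (measure_ball_pos volume _ one_pos).ne'
  have hVtop : V ≠ ⊤ := measure_ball_lt_top.ne
  have hVR : 0 < V.toReal := ENNReal.toReal_pos hV0 hVtop
  refine ⟨C * 2 ^ n * (8 + 1 / Real.log 2) * V.toReal, by positivity, ?_⟩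
  intro ξ hξ f hf x
  by_cases hξ0 : ξ = 0
  · subst hξ0
    simp only [add_zero, sub_self, norm_zero, zero_mul, ENNReal.ofReal_zero, lintegral_zero]
    exact zero_le
  have hξpos : 0 < ‖ξ‖ := norm_pos_iff.mpr hξ0
  set T : ℝ := 8 * ‖ξ‖ / η with hTdef
  set I : ℝ := ∫ s in Set.Ioc (0 : ℝ) T, ω s / s with hIdef
  have hT0 : 0 < T := by positivity
  have hT1 : T < 1 := by rw [hTdef, div_lt_one hη]; linarith
  have hI0 : 0 ≤ I := by
    apply setIntegral_nonneg measurableSet_Ioc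
    exact fun s hs => div_nonneg (hω0 s) hs.1.le
  set r : ℕ → ℝ := fun k => 2 ^ k * (η / 4) with hrdef
  set a : ℕ → ℝ := fun k => ‖ξ‖ / r k with hadef
  set c : ℕ → ℝ := fun k => C / r k ^ n * (ω (a k) + a k) with hcdef
  set A : ℕ → Set (EuclideanSpace ℝ (Fin n)) := fun k => Metric.ball x (r (k + 1)) \ Metric.ball x (r k) with hAdef
  have hreq : ∀ k, r k = 2 ^ k * (η / 4) := fun _ => rfl
  have haeq : ∀ k, a k = ‖ξ‖ / r k := fun _ => rfl
  have hceq : ∀ k, c k = C / r k ^ n * (ω (a k) + a k) := fun _ => rfl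
  have hAeq : ∀ k, A k = Metric.ball x (r (k + 1)) \ Metric.ball x (r k) := fun _ => rfl
  have hr : ∀ k, 0 < r k := fun k => by rw [hreq k]; positivity
  have hr4 : ∀ k, η / 4 ≤ r k := by
    intro k
    rw [hreq k]
    have h1 : (1 : ℝ) ≤ 2 ^ k := one_le_pow₀ one_le_two
    nlinarith
  have hrsucc : ∀ k, r (k + 1) = 2 * r k := by
    intro k; rw [hreq (k + 1), hreq k, pow_succ]; ring
  have hξr : ∀ k, ‖ξ‖ < r k := fun k => by linarith [hr4 k, hξ]
  have ha0 : ∀ k, 0 ≤ a k := fun k => by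
    rw [haeq k]; positivity
  have ha1 : ∀ k, a k < 1 := fun k => by
    rw [haeq k, div_lt_one (hr k)]; exact hξr k
  have haT : ∀ k, a k = T / 2 ^ (k + 1) := by
    intro k
    rw [haeq k, hreq k, hTdef, pow_succ]
    field_simp
    ring
  have hc0 : ∀ k, 0 ≤ c k := by
    intro k
    rw [hceq k]
    have := hω0 (a k); have := ha0 k; have h2 := pow_pos (hr k) n
    positivity
  clear_value T I r a c A
  set Mx : ℝ≥0∞ := hlMaximal f x with hMx
  -- ball estimate
  have hball : ∀ R : ℝ, 0 < R →
      ∫⁻ y in Metric.ball x R, ENNReal.ofReal |f y| ≤ volume (Metric.ball x R) * Mx := by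
    intro R hR
    have h1 : (volume (ball x R))⁻¹ * ∫⁻ y in ball x R, ENNReal.ofReal |f y| ≤ Mx := by
      rw [hMx, hlMaximal]
      exact le_iSup₂_of_le x R (le_iSup₂_of_le hR (mem_ball_self hR) le_rfl)
    calc ∫⁻ y in ball x R, ENNReal.ofReal |f y|
        = volume (ball x R) * ((volume (ball x R))⁻¹ * ∫⁻ y in ball x R, ENNReal.ofReal |f y|) := by
          rw [← mul_assoc, ENNReal.mul_inv_cancel (measure_ball_pos volume x hR).ne'
            measure_ball_lt_top.ne, one_mul]
      _ ≤ volume (ball x R) * Mx := mul_le_mul_right h1 _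
  -- pointwise domination
  have hpt : ∀ y : EuclideanSpace ℝ (Fin n), ENNReal.ofReal (‖Kη x y - Kη (x + ξ) y‖ * |f y|) ≤
      ∑' k, (A k).indicator (fun y => ENNReal.ofReal (c k) * ENNReal.ofReal |f y|) y := by
    intro y
    by_cases hy : ‖x - y‖ < η / 4
    · obtain ⟨h1, h2⟩ := hvanish x y ξ hξ hy
      simp only [h1, h2, sub_zero, norm_zero, zero_mul, ENNReal.ofReal_zero]
      exact zero_le
    push_neg at hy
    have hex : ∃ m, ‖x - y‖ < r m := by
      obtain ⟨m, hm⟩ := pow_unbounded_of_one_lt (‖x - y‖ / (η / 4)) one_lt_two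
      refine ⟨m, ?_⟩
      rw [hreq m]
      rw [div_lt_iff₀ (by positivity)] at hm
      linarith
    set K := Nat.find hex with hKdef
    have hKspec : ‖x - y‖ < r K := Nat.find_spec hex
    have hK0 : K ≠ 0 := by
      intro h
      rw [h] at hKspec
      have hr0 : r 0 = η / 4 := by rw [hreq 0]; norm_num
      rw [hr0] at hKspec
      linarith
    obtain ⟨k, hk⟩ := Nat.exists_eq_succ_of_ne_zero hK0
    have hlb : r k ≤ ‖x - y‖ := by
      by_contra hcon
      push_neg at hcon
      exact absurd (Nat.find_min hex (by omega : k < K) hcon) (fun h => h)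
    have hub : ‖x - y‖ < r (k + 1) := by rwa [hk] at hKspec
    have hmem : y ∈ A k := by
      rw [hAeq k]
      constructor
      · rw [mem_ball, dist_eq_norm, norm_sub_rev]; exact hub
      · rw [mem_ball, dist_eq_norm, norm_sub_rev]; push_neg; exact hlb
    have hxpos : 0 < ‖x - y‖ := lt_of_lt_of_le (hr k) hlb
    have hq1 : ‖ξ‖ / ‖x - y‖ ≤ a k := by
      rw [haeq k]
      exact div_le_div_of_nonneg_left (norm_nonneg ξ) (hr k) hlb
    have hqlt : ‖ξ‖ / ‖x - y‖ < 1 := by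
      rw [div_lt_one hxpos]; linarith [hr4 k]
    have hnorm : ‖Kη x y - Kη (x + ξ) y‖ ≤ c k := by
      have h0 := hdiff x y ξ hξ hy
      rw [Real.rpow_natCast] at h0
      refine h0.trans ?_
      rw [hceq k]
      have hωle : ω (‖ξ‖ / ‖x - y‖) ≤ ω (a k) :=
        hωmono ⟨by positivity, hqlt⟩ ⟨ha0 k, ha1 k⟩ hq1
      have hdiv : C / ‖x - y‖ ^ n ≤ C / r k ^ n :=
        div_le_div_of_nonneg_left hC.le (pow_pos (hr k) n)
          (pow_le_pow_left₀ (hr k).le hlb n)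
      apply mul_le_mul hdiv (add_le_add hωle hq1)
        (add_nonneg (hω0 _) (by positivity))
        (div_nonneg hC.le (pow_pos (hr k) n).le)
    calc ENNReal.ofReal (‖Kη x y - Kη (x + ξ) y‖ * |f y|)
        ≤ ENNReal.ofReal (c k * |f y|) :=
          ENNReal.ofReal_le_ofReal (mul_le_mul_of_nonneg_right hnorm (abs_nonneg _))
      _ = ENNReal.ofReal (c k) * ENNReal.ofReal |f y| := ENNReal.ofReal_mul (hc0 k)
      _ = (A k).indicator (fun y => ENNReal.ofReal (c k) * ENNReal.ofReal |f y|) y :=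
          (Set.indicator_of_mem hmem (fun y => ENNReal.ofReal (c k) * ENNReal.ofReal |f y|)).symm
      _ ≤ ∑' m, (A m).indicator (fun y => ENNReal.ofReal (c m) * ENNReal.ofReal |f y|) y :=
          ENNReal.le_tsum k
  -- measurability
  have hFmeas : AEMeasurable (fun y => ENNReal.ofReal |f y|) volume := by
    apply ENNReal.measurable_ofReal.comp_aemeasurable
    exact continuous_abs.measurable.comp_aemeasurable hf.aestronglyMeasurable.aemeasurable
  have hAmeas : ∀ k, MeasurableSet (A k) := fun k => by
    rw [hAeq k]; exact measurableSet_ball.diff measurableSet_ball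
  have hgmeas : ∀ k, AEMeasurable
      ((A k).indicator fun y => ENNReal.ofReal (c k) * ENNReal.ofReal |f y|) volume :=
    fun k => (aemeasurable_const.mul hFmeas).indicator (hAmeas k)
  -- summability facts
  have hsum_bound : ∀ N, ∑ k ∈ Finset.range N, ω (a k) ≤ I / Real.log 2 := by
    intro N
    rw [le_div_iff₀ hL]
    have := lemB' ω hω0 hωmono hDini hT0 hT1 N
    simp_rw [haT]
    rw [hIdef]
    exact this
  have hsum_ω : Summable (fun k => ω (a k)) :=
    summable_of_sum_range_le (fun k => hω0 _) hsum_bound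
  have htsum_ω : ∑' k, ω (a k) ≤ I / Real.log 2 :=
    hsum_ω.tsum_le_of_sum_range_le hsum_bound
  have hgeo : Summable (fun k : ℕ => a k) := by
    have h1 : (fun k : ℕ => a k) = fun k : ℕ => (T / 2) * (1 / 2) ^ k := by
      funext k
      rw [haT k, pow_succ, one_div, inv_pow, ← div_eq_mul_inv, div_div, mul_comm ((2:ℝ) ^ k) 2]
    rw [h1]
    exact (summable_geometric_two).mul_left _
  have htsum_a : ∑' k, a k = T := by
    have h1 : (fun k : ℕ => a k) = fun k : ℕ => (T / 2) * (1 / 2) ^ k := by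
      funext k
      rw [haT k, pow_succ, one_div, inv_pow, ← div_eq_mul_inv, div_div, mul_comm ((2:ℝ) ^ k) 2]
    rw [h1, _root_.tsum_mul_left, tsum_geometric_two]
    ring
  have hsum_c : Summable (fun k => C * 2 ^ n * (ω (a k) + a k)) :=
    (hsum_ω.add hgeo).mul_left _
  -- main chain
  calc (∫⁻ y, ENNReal.ofReal (‖Kη x y - Kη (x + ξ) y‖ * |f y|))
      ≤ ∫⁻ y, ∑' k, (A k).indicator (fun y => ENNReal.ofReal (c k) * ENNReal.ofReal |f y|) y :=
        lintegral_mono hpt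
    _ = ∑' k, ∫⁻ y, (A k).indicator (fun y => ENNReal.ofReal (c k) * ENNReal.ofReal |f y|) y :=
        lintegral_tsum hgmeas
    _ = ∑' k, ENNReal.ofReal (c k) * ∫⁻ y in A k, ENNReal.ofReal |f y| := by
        congr 1
        funext k
        rw [lintegral_indicator (hAmeas k), lintegral_const_mul' _ _ ENNReal.ofReal_ne_top]
    _ ≤ ∑' k, ENNReal.ofReal (c k) * (ENNReal.ofReal (r (k + 1) ^ n) * (V * Mx)) := by
        apply ENNReal.tsum_le_tsum
        intro k
        apply mul_le_mul_right
        calc ∫⁻ y in A k, ENNReal.ofReal |f y|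
            ≤ ∫⁻ y in Metric.ball x (r (k + 1)), ENNReal.ofReal |f y| := by
              apply lintegral_mono_set
              rw [hAeq k]
              exact diff_subset
          _ ≤ volume (Metric.ball x (r (k + 1))) * Mx := hball _ (hr _)
          _ = ENNReal.ofReal (r (k + 1) ^ n) * (V * Mx) := by
              rw [Measure.addHaar_ball volume x (hr (k + 1)).le, finrank_euclideanSpace_fin,
                mul_assoc]
    _ = ∑' k, ENNReal.ofReal (C * 2 ^ n * (ω (a k) + a k)) * (V * Mx) := by
        congr 1
        funext k
        have h3 : (r k : ℝ) ^ n ≠ 0 := pow_ne_zero n (hr k).ne'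
        have hre : c k * r (k + 1) ^ n = C * 2 ^ n * (ω (a k) + a k) := by
          rw [hceq k, hrsucc k, mul_pow]
          calc C / r k ^ n * (ω (a k) + a k) * (2 ^ n * r k ^ n)
              = C * 2 ^ n * (ω (a k) + a k) * (r k ^ n / r k ^ n) := by ring
            _ = C * 2 ^ n * (ω (a k) + a k) := by rw [div_self h3, mul_one]
        rw [← mul_assoc, ← ENNReal.ofReal_mul (hc0 k), hre]
    _ = (∑' k, ENNReal.ofReal (C * 2 ^ n * (ω (a k) + a k))) * (V * Mx) :=
        ENNReal.tsum_mul_right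
    _ ≤ ENNReal.ofReal (C * 2 ^ n * (I / Real.log 2 + T)) * (V * Mx) := by
        apply mul_le_mul_left
        rw [← ENNReal.ofReal_tsum_of_nonneg
          (fun k => by have := hω0 (a k); have := ha0 k; positivity) hsum_c]
        apply ENNReal.ofReal_le_ofReal
        rw [_root_.tsum_mul_left, hsum_ω.tsum_add hgeo, htsum_a]
        have h2n : (0 : ℝ) ≤ C * 2 ^ n := by positivity
        apply mul_le_mul_of_nonneg_left (by linarith) h2n
    _ = ENNReal.ofReal (C * 2 ^ n * (I / Real.log 2 + T) * V.toReal) * Mx := by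
        have hX0 : 0 ≤ C * 2 ^ n * (I / Real.log 2 + T) := by
          apply mul_nonneg (by positivity)
          have := div_nonneg hI0 hL.le
          linarith
        rw [ENNReal.ofReal_mul hX0, ENNReal.ofReal_toReal hVtop]
        exact (mul_assoc _ V Mx).symm
    _ ≤ ENNReal.ofReal (C * 2 ^ n * (8 + 1 / Real.log 2) * V.toReal * (‖ξ‖ / η + I)) * Mx := by
        apply mul_le_mul_left
        apply ENNReal.ofReal_le_ofReal
        have hu0 : 0 ≤ ‖ξ‖ / η := by positivity
        have hTu : T = 8 * (‖ξ‖ / η) := by rw [hTdef]; ring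
        have hkey : I / Real.log 2 + T ≤ (8 + 1 / Real.log 2) * (‖ξ‖ / η + I) := by
          rw [hTu, div_eq_mul_inv I, one_div]
          have hinv : 0 < (Real.log 2)⁻¹ := by positivity
          nlinarith [mul_nonneg hI0 hinv.le, mul_nonneg hu0 hinv.le]
        calc C * 2 ^ n * (I / Real.log 2 + T) * V.toReal
            ≤ C * 2 ^ n * ((8 + 1 / Real.log 2) * (‖ξ‖ / η + I)) * V.toReal := by
              gcongr
          _ = C * 2 ^ n * (8 + 1 / Real.log 2) * V.toReal * (‖ξ‖ / η + I) := by ring
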